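/- arXiv:2301.02712 — 4 statements merged into one kernel-verified Lean document; each statement's English description precedes it below -/
import Mathlib

section
/- Let m ≥ 2 be an integer, 0 < ε < 1 and C > 0. Then there exists δ ∈ (0, 1/2) such that for every integer k ≥ 0 and all z̃, w̃ ∈ ℂ with z̃^{m^k} = ε and w̃^{m^k} = ε, one has max(ρ(1−δ, z̃), ρ(δ, w̃)) ≥ C. (Consequently, for F(z,w) = (z^m, w^m) the point (1−δ, δ) of the unit bidisc has Kobayashi distance at least C from every point of ∪_{k≥0} F^{−k}(ε, ε).) -/
open Filter Topology

/-- The Poincaré (= Kobayashi) distance on the unit disc: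
`ρ(z, w) = log((1 + t)/(1 − t))` with `t = |z − w| / |1 − z·conj w|`. -/
noncomputable def poincareDist (z w : ℂ) : ℝ :=
  Real.log ((1 + ‖z - w‖ / ‖1 - z * (starRingEnd ℂ) w‖) /
            (1 - ‖z - w‖ / ‖1 - z * (starRingEnd ℂ) w‖))

lemma ratio_eq' (t u : ℝ) (hu : 0 < u) (htu : t < u) :
    (1 + t/u)/(1 - t/u) = (u+t)/(u-t) := by
  have h1 : 0 < 1 - t/u := by
    rw [sub_pos, div_lt_one hu]; exact htu
  have h2 : 0 < u - t := by linarith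
  rw [div_eq_div_iff h1.ne' h2.ne']
  field_simp

set_option maxHeartbeats 1000000 in
lemma key_aux' (a : ℝ) (ha0 : 0 ≤ a) (ha1 : a < 1) (r x y t u : ℝ)
    (hr0 : 0 ≤ r) (hz1 : r < 1) (hxr : x ≤ r)
    (hr2 : r ^ 2 = x ^ 2 + y ^ 2)
    (ht0 : 0 ≤ t) (hu0' : 0 ≤ u)
    (ht2 : t ^ 2 = (a - x) ^ 2 + y ^ 2)
    (hu2 : u ^ 2 = (1 - a * x) ^ 2 + (a * y) ^ 2) :
    t < u ∧ 0 < 1 - a * r - |r - a| ∧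
      (1 - a * r + |r - a|) / (1 - a * r - |r - a|) ≤ (u + t) / (u - t) := by
  have har : a * r < 1 := lt_of_le_of_lt (mul_le_of_le_one_left hr0 (le_of_lt ha1)) hz1
  have hid : u ^ 2 - t ^ 2 = (1 - a^2) * (1 - r^2) := by
    rw [ht2, hu2]; linear_combination (1 - a^2) * hr2
  have hut : t < u := by
    have h2 : t^2 < u^2 := by
      nlinarith [mul_pos (by nlinarith : (0:ℝ) < 1 - a^2) (by nlinarith : (0:ℝ) < 1 - r^2)]
    exact lt_of_pow_lt_pow_left₀ 2 hu0' h2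
  have hu0 : 0 < u := lt_of_le_of_lt ht0 hut
  have hkeyid : (t * (1 - a * r)) ^ 2 - (|r - a| * u) ^ 2
      = 2 * a * (r - x) * (1 - a ^ 2) * (1 - r ^ 2) := by
    rw [mul_pow, mul_pow, sq_abs, ht2, hu2]
    linear_combination ((r-a)^2 * a^2 - (1 - a*r)^2) * hr2
  have hN : 0 ≤ 2 * a * (r - x) * (1 - a ^ 2) * (1 - r ^ 2) := by
    have h1 : (0:ℝ) ≤ 2 * a := by linarith
    have h2 : (0:ℝ) ≤ r - x := by linarith
    have h3 : (0:ℝ) ≤ 1 - a^2 := by nlinarith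
    have h4 : (0:ℝ) ≤ 1 - r^2 := by nlinarith
    exact mul_nonneg (mul_nonneg (mul_nonneg h1 h2) h3) h4
  have hkey : |r - a| * u ≤ t * (1 - a * r) := by
    have hB : 0 ≤ t * (1 - a * r) := mul_nonneg ht0 (by linarith)
    have hA : 0 ≤ |r - a| * u := mul_nonneg (abs_nonneg _) hu0'
    have hsq : (|r - a| * u) ^ 2 ≤ (t * (1 - a * r)) ^ 2 := by linarith
    exact (pow_le_pow_iff_left₀ hA hB (by norm_num)).mp hsq
  have hQ : 0 < 1 - a * r - |r - a| := by
    rcases abs_cases (r - a) with ⟨he, _⟩ | ⟨he, _⟩ <;> nlinarith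
  refine ⟨hut, hQ, ?_⟩
  rw [div_le_div_iff₀ hQ (by linarith)]
  nlinarith [hkey]

lemma key' (a : ℝ) (ha0 : 0 ≤ a) (ha1 : a < 1) (z : ℂ) (hz1 : ‖z‖ < 1) (C : ℝ)
    (h : Real.exp C ≤ (1 - a * ‖z‖ + |‖z‖ - a|) /
        (1 - a * ‖z‖ - |‖z‖ - a|)) :
    C ≤ poincareDist (a : ℂ) z := by
  obtain ⟨r, hr⟩ : ∃ r, ‖z‖ = r := ⟨_, rfl⟩
  obtain ⟨t, htd⟩ : ∃ t, ‖(a:ℂ) - z‖ = t := ⟨_, rfl⟩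
  obtain ⟨u, hud⟩ : ∃ u, ‖1 - (a:ℂ) * (starRingEnd ℂ) z‖ = u := ⟨_, rfl⟩
  rw [hr] at h hz1
  have hr0 : 0 ≤ r := hr ▸ norm_nonneg z
  have hxr : z.re ≤ r := hr ▸ Complex.re_le_norm z
  have hr2 : r ^ 2 = z.re ^ 2 + z.im ^ 2 := by
    rw [← hr, Complex.sq_norm, Complex.normSq_apply]; ring
  have ht0 : 0 ≤ t := htd ▸ norm_nonneg _
  have hu0' : 0 ≤ u := hud ▸ norm_nonneg _
  have ht2 : t ^ 2 = (a - z.re) ^ 2 + z.im ^ 2 := by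
    rw [← htd, Complex.sq_norm, Complex.normSq_apply]
    simp [Complex.sub_re, Complex.sub_im]
    ring
  have hu2 : u ^ 2 = (1 - a * z.re) ^ 2 + (a * z.im) ^ 2 := by
    rw [← hud, Complex.sq_norm, Complex.normSq_apply]
    simp [Complex.sub_re, Complex.sub_im, Complex.mul_re, Complex.mul_im]
    ring
  obtain ⟨hut, hQ, hle⟩ :=
    key_aux' a ha0 ha1 r z.re z.im t u hr0 hz1 hxr hr2 ht0 hu0' ht2 hu2
  have hu0 : 0 < u := lt_of_le_of_lt ht0 hut
  unfold poincareDist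
  rw [htd, hud, ratio_eq' t u hu0 hut,
    Real.le_log_iff_exp_le (div_pos (by linarith) (by linarith))]
  exact le_trans h hle

set_option maxHeartbeats 1000000 in
/-- For `F(z,w) = (z^m, w^m)` and an arbitrary constant `C > 0`, there is a point
`(1−δ, δ)` of the unit bidisc whose Kobayashi distance to every point of
`∪_{k≥0} F^{−k}(ε, ε)` is at least `C`. -/
theorem stmt0 (m : ℕ) (hm : 2 ≤ m) (ε : ℝ) (hε0 : 0 < ε) (hε1 : ε < 1)
    (C : ℝ) (hC : 0 < C) :
    ∃ δ : ℝ, 0 < δ ∧ δ < 1 / 2 ∧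
      ∀ (k : ℕ) (z w : ℂ), z ^ (m ^ k) = (ε : ℂ) → w ^ (m ^ k) = (ε : ℂ) →
        C ≤ max (poincareDist ((1 : ℂ) - (δ : ℂ)) z) (poincareDist (δ : ℂ) w) := by
  set E := Real.exp C with hE
  have hE0 : 0 < E := Real.exp_pos C
  have hE1 : 1 < E := by
    rw [hE, ← Real.exp_zero]
    exact Real.exp_lt_exp.mpr hC
  refine ⟨min (1/4) (3/(10*E^2)), by positivity, ?_, ?_⟩
  · calc min (1/4) (3/(10*E^2)) ≤ 1/4 := min_le_left _ _
      _ < 1/2 := by norm_num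
  intro k z w hz hw
  set δ := min (1/4) (3/(10*E^2)) with hδ
  have hδ0 : 0 < δ := by positivity
  have hδ14 : δ ≤ 1/4 := min_le_left _ _
  have hδE : δ ≤ 3/(10*E^2) := min_le_right _ _
  have hδ5E : δ ≤ 3/(5*E) := by
    refine le_trans hδE ?_
    rw [div_le_div_iff₀ (by positivity) (by positivity)]
    nlinarith
  have hn : 1 ≤ m ^ k := Nat.one_le_pow _ _ (by omega)
  -- moduli
  have habs : ∀ v : ℂ, v ^ (m ^ k) = (ε : ℂ) → ‖v‖ ^ (m ^ k) = ε := by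
    intro v hv
    have := congrArg norm hv
    rwa [norm_pow, Complex.norm_real, Real.norm_eq_abs, abs_of_pos hε0] at this
  have hrz := habs z hz
  have hrw := habs w hw
  have hlt1 : ∀ v : ℂ, ‖v‖ ^ (m ^ k) = ε → ‖v‖ < 1 := by
    intro v hv
    by_contra hcon
    push_neg at hcon
    have : (1:ℝ) ≤ ‖v‖ ^ (m ^ k) := one_le_pow₀ hcon
    linarith
  have hz1 : ‖z‖ < 1 := hlt1 z hrz
  have hw1 : ‖w‖ < 1 := hlt1 w hrw
  have hzw : ‖z‖ = ‖w‖ := by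
    rcases lt_trichotomy (‖z‖) (‖w‖) with h | h | h
    · exfalso
      have := pow_lt_pow_left₀ h (norm_nonneg z) (by omega : m ^ k ≠ 0)
      rw [hrz, hrw] at this; linarith
    · exact h
    · exfalso
      have := pow_lt_pow_left₀ h (norm_nonneg w) (by omega : m ^ k ≠ 0)
      rw [hrz, hrw] at this; linarith
  by_cases hcase : ‖z‖ < 1 - 3/(5*E)
  · -- z has small modulus: use the coordinate 1 - δ
    refine le_trans ?_ (le_max_left _ _)
    have hcast : ((1:ℂ) - (δ:ℂ)) = (((1 - δ : ℝ)) : ℂ) := by push_cast; ring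
    rw [hcast]
    apply key' (1 - δ) (by linarith) (by linarith) z hz1 C
    set r := ‖z‖ with hr
    have hr0 : 0 ≤ r := norm_nonneg z
    have hra : r ≤ 1 - δ := by
      have : 3/(5*E) ≤ 1 - r := by linarith [hcase]
      linarith
    rw [abs_of_nonpos (by linarith : r - (1 - δ) ≤ 0)]
    have hden : 0 < 1 - (1 - δ) * r - -(r - (1 - δ)) := by nlinarith
    rw [← hE, le_div_iff₀ hden]
    have hfrac : 3 < (1 - r) * (5 * E) := by
      have h1 : 3/(5*E) < 1 - r := by linarith [hcase]
      calc (3:ℝ) = 3/(5*E) * (5*E) := by field_simp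
        _ < (1 - r) * (5 * E) := by
            apply mul_lt_mul_of_pos_right h1 (by positivity)
    have hδE' : δ * (10 * E^2) ≤ 3 := by
      calc δ * (10 * E^2) ≤ 3/(10*E^2) * (10*E^2) := by
            apply mul_le_mul_of_nonneg_right hδE (by positivity)
        _ = 3 := by field_simp
    have h5 : 2*E*δ < 1 - r := by nlinarith [mul_pos hE0 hδ0]
    nlinarith [mul_nonneg (mul_nonneg hE0.le hδ0.le) (sub_nonneg.mpr hz1.le),
      mul_nonneg hδ0.le (sub_nonneg.mpr hz1.le), mul_pos hE0 hδ0]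
  · -- w has large modulus: use the coordinate δ
    refine le_trans ?_ (le_max_right _ _)
    apply key' δ hδ0.le (by linarith) w hw1 C
    set s := ‖w‖ with hs
    have hs0 : 0 ≤ s := norm_nonneg w
    push_neg at hcase
    have hsbig : 1 - 3/(5*E) ≤ s := by rw [← hzw]; exact hcase
    have h35 : 3/(5*E) < 3/5 := by
      rw [div_lt_div_iff₀ (by positivity) (by norm_num)]
      nlinarith
    have hsδ : δ ≤ s := by linarith
    rw [abs_of_nonneg (by linarith : 0 ≤ s - δ)]
    have hden : 0 < 1 - δ * s - (s - δ) := by nlinarith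
    rw [← hE, le_div_iff₀ hden]
    have hfrac : (1 - s) * (5 * E) ≤ 3 := by
      have h1 : 1 - s ≤ 3/(5*E) := by linarith
      calc (1 - s) * (5 * E) ≤ 3/(5*E) * (5*E) := by
            apply mul_le_mul_of_nonneg_right h1 (by positivity)
        _ = 3 := by field_simp
    nlinarith [mul_nonneg hs0 (by linarith : (0:ℝ) ≤ 1 - δ),
      mul_nonneg (sub_nonneg.mpr hw1.le) hδ0.le, mul_pos hE0 hδ0]
end

section
/- Let a ∈ ℂ with |a| < 3/16. Then there exists a sequence (f_n)_{n≥0} of holomorphic functions on the open unit disc Δ such that: f_0 ≡ 2/3; for every n and every z ∈ Δ, f_{n+1}(z)² = f_n(z²) − a·z and f_{n+1}(0) > 0; for every n and z ∈ Δ, |f_n(z)| ≥ 2/3 (in particular f_n(z²) − a·z never vanishes on Δ, so the holomorphic square roots exist); and f_n(0) = (2/3)^{1/2^n}, so f_n(0) → 1 as n → ∞. -/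
open Filter Topology


noncomputable def sqrtC (w : ℂ) : ℂ := Complex.exp (Complex.log w / 2)

lemma sqrtC_sq {w : ℂ} (hw : w ≠ 0) : sqrtC w ^ 2 = w := by
  rw [sqrtC, sq, ← Complex.exp_add]
  rw [show Complex.log w / 2 + Complex.log w / 2 = Complex.log w by ring, Complex.exp_log hw]

lemma sqrtC_re_nonneg (w : ℂ) : 0 ≤ (sqrtC w).re := by
  rw [sqrtC, Complex.exp_re]
  have him : (Complex.log w / 2).im = w.arg / 2 := by
    simp [Complex.div_im, Complex.log_im]
  rw [him]
  have h := Complex.arg_mem_Ioc w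
  have hc : 0 ≤ Real.cos (w.arg / 2) := by
    apply Real.cos_nonneg_of_mem_Icc
    constructor
    · linarith [h.1, Real.pi_pos]
    · linarith [h.2]
  positivity

lemma sqrtC_est {w : ℂ} (hw : ‖w - 1‖ ≤ 25 / 48) :
    ‖sqrtC w - 1‖ ≤ 1 / 3 := by
  have hre : (23 : ℝ) / 48 ≤ w.re := by
    have := Complex.abs_re_le_norm (w - 1)
    simp only [Complex.sub_re, Complex.one_re] at this
    have := abs_le.mp (this.trans hw)
    linarith [this.1]
  have hw0 : w ≠ 0 := by
    intro h; rw [h] at hre; simp at hre; linarith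
  set s := sqrtC w with hs
  have hsq : s ^ 2 = w := sqrtC_sq hw0
  have hre0 : 0 ≤ s.re := sqrtC_re_nonneg w
  have hre2 : (23 : ℝ) / 48 ≤ s.re ^ 2 := by
    have : w.re = s.re ^ 2 - s.im ^ 2 := by
      rw [← hsq, sq, Complex.mul_re]; ring
    nlinarith [sq_nonneg s.im]
  have hres : (9 : ℝ) / 16 ≤ s.re := by nlinarith
  have habs1 : (25 : ℝ) / 16 ≤ ‖s + 1‖ := by
    calc (25 : ℝ)/16 ≤ (s + 1).re := by simp [Complex.add_re]; linarith
    _ ≤ ‖s + 1‖ := Complex.re_le_norm _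
  have hmul : ‖s - 1‖ * ‖s + 1‖ = ‖w - 1‖ := by
    rw [← norm_mul]; congr 1; rw [← hsq]; ring
  nlinarith [norm_nonneg (s - 1), hw]

lemma sqrtC_diff {w : ℂ} (hw : 0 < w.re) : DifferentiableAt ℂ sqrtC w := by
  have h1 : DifferentiableAt ℂ Complex.log w :=
    Complex.differentiableAt_log (Complex.mem_slitPlane_iff.mpr (Or.inl hw))
  exact Complex.differentiable_exp.differentiableAt.comp w ((h1.div_const 2))

lemma sqrtC_ofReal {r : ℝ} (hr : 0 < r) : sqrtC (r : ℂ) = ((r ^ ((1:ℝ)/2) : ℝ) : ℂ) := by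
  rw [sqrtC, ← Complex.ofReal_log hr.le]
  rw [show ((Real.log r : ℂ)) / 2 = ((Real.log r / 2 : ℝ) : ℂ) by push_cast; ring]
  rw [← Complex.ofReal_exp, Real.rpow_def_of_pos hr]
  congr 1; push_cast; ring

noncomputable def Fseq (a : ℂ) : ℕ → ℂ → ℂ
  | 0 => fun _ => 2 / 3
  | n + 1 => fun z => sqrtC (Fseq a n (z ^ 2) - a * z)

lemma sq_mem_ball {z : ℂ} (hz : z ∈ Metric.ball (0 : ℂ) 1) :
    z ^ 2 ∈ Metric.ball (0 : ℂ) 1 := by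
  rw [Metric.mem_ball, dist_zero_right] at hz ⊢
  calc ‖z ^ 2‖ = ‖z‖ ^ 2 := by rw [norm_pow]
  _ < 1 := by nlinarith [norm_nonneg z]

/-- Successive square-root preimage graphs for `F(z,w) = (z², w² + az)`, `|a| < 3/16`:
there is a sequence of holomorphic functions `f_n` on the unit disc with `f_0 ≡ 2/3`,
`f_{n+1}(z)² = f_n(z²) − a z`, `f_{n+1}(0) > 0`, `|f_n| ≥ 2/3` on the disc,
`f_n(0) = (2/3)^{1/2^n}` and `f_n(0) → 1`. -/
theorem stmt7 (a : ℂ) (ha : ‖a‖ < 3 / 16) :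
    ∃ f : ℕ → ℂ → ℂ,
      (∀ n, DifferentiableOn ℂ (f n) (Metric.ball (0 : ℂ) 1)) ∧
      (∀ z ∈ Metric.ball (0 : ℂ) 1, f 0 z = 2 / 3) ∧
      (∀ n, ∀ z ∈ Metric.ball (0 : ℂ) 1, f (n + 1) z ^ 2 = f n (z ^ 2) - a * z) ∧
      (∀ n, ∃ r : ℝ, 0 < r ∧ f (n + 1) 0 = (r : ℂ)) ∧
      (∀ n, ∀ z ∈ Metric.ball (0 : ℂ) 1, 2 / 3 ≤ ‖f n z‖) ∧
      (∀ n, f n 0 = ((((2 : ℝ) / 3) ^ ((1 : ℝ) / 2 ^ n) : ℝ) : ℂ)) ∧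
      Tendsto (fun n => f n 0) atTop (𝓝 1) := by
  set B := Metric.ball (0 : ℂ) 1
  refine ⟨Fseq a, ?_⟩
  -- the key argument bound
  have harg : ∀ n, (∀ z ∈ B, ‖Fseq a n z - 1‖ ≤ 1 / 3) →
      ∀ z ∈ B, ‖Fseq a n (z ^ 2) - a * z - 1‖ ≤ 25 / 48 := by
    intro n hn z hz
    have h1 := hn (z ^ 2) (sq_mem_ball hz)
    have h2 : ‖a * z‖ ≤ 3 / 16 := by
      rw [norm_mul]
      have hz1 : ‖z‖ ≤ 1 := by
        rw [Metric.mem_ball, dist_zero_right] at hz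
        exact le_of_lt hz
      calc ‖a‖ * ‖z‖ ≤ ‖a‖ * 1 :=
            mul_le_mul_of_nonneg_left hz1 (norm_nonneg a)
      _ ≤ 3 / 16 := by rw [mul_one]; linarith
    calc ‖Fseq a n (z ^ 2) - a * z - 1‖
        = ‖(Fseq a n (z ^ 2) - 1) + (-(a * z))‖ := by congr 1; ring
      _ ≤ ‖Fseq a n (z ^ 2) - 1‖ + ‖-(a * z)‖ :=
            norm_add_le _ _
      _ ≤ 1 / 3 + 3 / 16 := by rw [norm_neg]; linarith
      _ ≤ 25 / 48 := by norm_num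
  have hrepos : ∀ {w : ℂ}, ‖w - 1‖ ≤ 25 / 48 → 0 < w.re := by
    intro w hw
    have := Complex.abs_re_le_norm (w - 1)
    simp only [Complex.sub_re, Complex.one_re] at this
    have := abs_le.mp (this.trans hw)
    linarith [this.1]
  -- main induction
  have key : ∀ n, (DifferentiableOn ℂ (Fseq a n) B) ∧
      (∀ z ∈ B, ‖Fseq a n z - 1‖ ≤ 1 / 3) ∧
      (Fseq a n 0 = ((((2 : ℝ) / 3) ^ ((1 : ℝ) / 2 ^ n) : ℝ) : ℂ)) := by
    intro n
    induction n with
    | zero =>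
      refine ⟨differentiableOn_const _, ?_, ?_⟩
      · intro z hz
        show ‖(2 / 3 : ℂ) - 1‖ ≤ 1 / 3
        rw [show (2 / 3 : ℂ) - 1 = ((-1 / 3 : ℝ) : ℂ) by push_cast; ring, Complex.norm_real, Real.norm_eq_abs]
        norm_num [abs_le]
      · show (2 / 3 : ℂ) = _
        norm_num
    | succ n ih =>
      obtain ⟨hdiff, hbound, hval⟩ := ih
      have hargn := harg n hbound
      have hgdiff : DifferentiableOn ℂ (fun z => Fseq a n (z ^ 2) - a * z) B := by
        apply DifferentiableOn.sub
        · exact hdiff.comp (differentiable_pow 2).differentiableOn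
            (fun z hz => sq_mem_ball hz)
        · exact (differentiable_id.const_mul a).differentiableOn
      refine ⟨?_, ?_, ?_⟩
      · intro z hz
        have : DifferentiableWithinAt ℂ (sqrtC ∘ fun w => Fseq a n (w ^ 2) - a * w) B z :=
          DifferentiableAt.comp_differentiableWithinAt (g := sqrtC)
            (f := fun w => Fseq a n (w ^ 2) - a * w) z
            (sqrtC_diff (hrepos (hargn z hz))) (hgdiff z hz)
        exact this
      · intro z hz
        exact sqrtC_est (hargn z hz)
      · show sqrtC (Fseq a n (0 ^ 2) - a * 0) = _
        rw [show ((0:ℂ)^2) = 0 by ring, mul_zero, sub_zero, hval]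
        have hp : (0 : ℝ) < ((2 : ℝ) / 3) ^ ((1 : ℝ) / 2 ^ n) :=
          Real.rpow_pos_of_pos (by norm_num) _
        rw [sqrtC_ofReal hp]
        norm_cast
        rw [← Real.rpow_mul (by norm_num : (0:ℝ) ≤ 2/3)]
        congr 1
        rw [pow_succ]
        push_cast
        ring
  refine ⟨fun n => (key n).1, fun z _ => rfl, ?_, ?_, ?_, fun n => (key n).2.2, ?_⟩
  · intro n z hz
    show sqrtC (Fseq a n (z ^ 2) - a * z) ^ 2 = _
    have hpos := hrepos (harg n (key n).2.1 z hz)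
    refine sqrtC_sq fun h => ?_
    rw [h] at hpos; simp at hpos
  · intro n
    refine ⟨((2 : ℝ) / 3) ^ ((1 : ℝ) / 2 ^ (n + 1)), Real.rpow_pos_of_pos (by norm_num) _,
      (key (n + 1)).2.2⟩
  · intro n z hz
    have hb := (key n).2.1 z hz
    have t : ‖(1 : ℂ)‖ ≤ ‖Fseq a n z‖ + ‖1 - Fseq a n z‖ := by
      calc ‖(1 : ℂ)‖ = ‖Fseq a n z + (1 - Fseq a n z)‖ := by
            congr 1; ring
      _ ≤ _ := norm_add_le _ _
    rw [show (1 : ℂ) - Fseq a n z = -(Fseq a n z - 1) by ring, norm_neg,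
      norm_one] at t
    linarith
  · have h1 : Tendsto (fun n : ℕ => (1 : ℝ) / 2 ^ n) atTop (𝓝 0) := by
      have : (fun n : ℕ => (1 : ℝ) / 2 ^ n) = fun n : ℕ => ((1 : ℝ) / 2) ^ n := by
        funext n; rw [div_pow, one_pow]
      rw [this]
      exact tendsto_pow_atTop_nhds_zero_of_lt_one (by norm_num) (by norm_num)
    have h2 : ContinuousAt (fun x : ℝ => ((2 : ℝ) / 3) ^ x) 0 :=
      Real.continuousAt_const_rpow (by norm_num)
    have h3 : Tendsto (fun n : ℕ => ((2 : ℝ) / 3) ^ ((1 : ℝ) / 2 ^ n)) atTop (𝓝 1) := by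
      have := h2.tendsto.comp h1
      simpa [Function.comp_def] using this
    have h4 := (Complex.continuous_ofReal.tendsto 1).comp h3
    apply h4.congr
    intro n
    exact ((key n).2.2).symm
end

section
/- Let a, b, c ∈ ℂ with |a| ≤ 1/10, |b| ≤ 1/10, |c| ≤ 1/10, and let F(z, w) = (az + z², w² + cw + bz). Then the attracting basin of (0,0) for F is contained in the bidisc {(z, w) ∈ ℂ² : |z| < 2 and |w| < 2}; in particular the basin is a bounded subset of ℂ². -/
open Filter Topology

/-- For `F(z,w) = (az + z², w² + cw + bz)` with `|a|, |b|, |c| ≤ 1/10`, the attracting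
basin of `(0,0)` is contained in the bidisc `{|z| < 2, |w| < 2}`; in particular it is
a bounded subset of `ℂ²`. -/
theorem stmt9 (a b c : ℂ)
    (ha : ‖a‖ ≤ 1 / 10) (hb : ‖b‖ ≤ 1 / 10)
    (hc : ‖c‖ ≤ 1 / 10) :
    {p : ℂ × ℂ |
        Tendsto (fun n =>
          (fun q : ℂ × ℂ => (a * q.1 + q.1 ^ 2, q.2 ^ 2 + c * q.2 + b * q.1))^[n] p)
          atTop (𝓝 (0, 0))} ⊆
      {p : ℂ × ℂ | ‖p.1‖ < 2 ∧ ‖p.2‖ < 2} ∧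
    Bornology.IsBounded
      {p : ℂ × ℂ |
        Tendsto (fun n =>
          (fun q : ℂ × ℂ => (a * q.1 + q.1 ^ 2, q.2 ^ 2 + c * q.2 + b * q.1))^[n] p)
          atTop (𝓝 (0, 0))} := by
  set F : ℂ × ℂ → ℂ × ℂ :=
    fun q : ℂ × ℂ => (a * q.1 + q.1 ^ 2, q.2 ^ 2 + c * q.2 + b * q.1) with hF
  -- invariance of the escape region
  have key : ∀ q : ℂ × ℂ, (2 ≤ ‖q.1‖ ∨ 2 ≤ ‖q.2‖) →
      (2 ≤ ‖(F q).1‖ ∨ 2 ≤ ‖(F q).2‖) := by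
    rintro ⟨z, w⟩ hq
    by_cases hz : 2 ≤ ‖z‖
    · left
      have h1 : ‖z ^ 2‖ ≤ ‖a * z + z ^ 2‖ + ‖a * z‖ := by
        calc ‖z ^ 2‖ = ‖(a * z + z ^ 2) + (-(a * z))‖ := by ring_nf
        _ ≤ ‖a * z + z ^ 2‖ + ‖-(a * z)‖ := norm_add_le _ _
        _ = ‖a * z + z ^ 2‖ + ‖a * z‖ := by rw [norm_neg]
      have h2 : ‖z ^ 2‖ = ‖z‖ ^ 2 := by rw [norm_pow]
      have h3 : ‖a * z‖ = ‖a‖ * ‖z‖ := by rw [norm_mul]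
      have h4 : (0:ℝ) ≤ ‖z‖ := norm_nonneg z
      show 2 ≤ ‖a * z + z ^ 2‖
      nlinarith
    · push_neg at hz
      have hw : 2 ≤ ‖w‖ := hq.resolve_left (not_le.mpr hz)
      right
      have h1 : ‖w ^ 2‖ ≤
          ‖w ^ 2 + c * w + b * z‖ + ‖c * w‖ + ‖b * z‖ := by
        calc ‖w ^ 2‖
            = ‖(w ^ 2 + c * w + b * z) + (-(c * w)) + (-(b * z))‖ := by ring_nf
        _ ≤ ‖(w ^ 2 + c * w + b * z) + (-(c * w))‖ + ‖-(b * z)‖ :=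
            norm_add_le _ _
        _ ≤ ‖w ^ 2 + c * w + b * z‖ + ‖-(c * w)‖
              + ‖-(b * z)‖ := by
            gcongr; exact norm_add_le _ _
        _ = _ := by rw [norm_neg, norm_neg]
      have h2 : ‖w ^ 2‖ = ‖w‖ ^ 2 := by rw [norm_pow]
      have h3 : ‖c * w‖ = ‖c‖ * ‖w‖ := by rw [norm_mul]
      have h5 : ‖b * z‖ = ‖b‖ * ‖z‖ := by rw [norm_mul]
      have h4 : (0:ℝ) ≤ ‖w‖ := norm_nonneg w
      have h6 : (0:ℝ) ≤ ‖z‖ := norm_nonneg z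
      show 2 ≤ ‖w ^ 2 + c * w + b * z‖
      nlinarith
  have iter : ∀ p : ℂ × ℂ, (2 ≤ ‖p.1‖ ∨ 2 ≤ ‖p.2‖) → ∀ n,
      2 ≤ ‖((F^[n]) p).1‖ ∨ 2 ≤ ‖((F^[n]) p).2‖ := by
    intro p hp n
    induction n with
    | zero => simpa using hp
    | succ n ih => rw [Function.iterate_succ_apply']; exact key _ ih
  have subset : {p : ℂ × ℂ | Tendsto (fun n => (F^[n]) p) atTop (𝓝 (0, 0))} ⊆
      {p : ℂ × ℂ | ‖p.1‖ < 2 ∧ ‖p.2‖ < 2} := by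
    intro p hp
    by_contra hcon
    have hesc : 2 ≤ ‖p.1‖ ∨ 2 ≤ ‖p.2‖ := by
      by_contra h
      push_neg at h
      exact hcon ⟨h.1, h.2⟩
    obtain ⟨N, hN⟩ := Metric.tendsto_atTop.mp hp 2 two_pos
    have hdist : dist ((F^[N]) p) ((0:ℂ), (0:ℂ)) < 2 := hN N le_rfl
    rw [Prod.dist_eq] at hdist
    have h1 : ‖((F^[N]) p).1‖ < 2 := by
      have := (max_lt_iff.mp hdist).1
      rwa [Complex.dist_eq, sub_zero] at this
    have h2 : ‖((F^[N]) p).2‖ < 2 := by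
      have := (max_lt_iff.mp hdist).2
      rwa [Complex.dist_eq, sub_zero] at this
    rcases iter p hesc N with h | h
    · exact absurd h1 (not_lt.mpr h)
    · exact absurd h2 (not_lt.mpr h)
  refine ⟨subset, ?_⟩
  apply Bornology.IsBounded.subset (Metric.isBounded_ball (x := ((0:ℂ),(0:ℂ))) (r := 2))
  intro p hp
  obtain ⟨h1, h2⟩ := subset hp
  rw [Metric.mem_ball, Prod.dist_eq]
  exact max_lt (by rwa [Complex.dist_eq, sub_zero]) (by rwa [Complex.dist_eq, sub_zero])
end

section
/- Let a, b, c ∈ ℂ with |a| ≤ 1/10 and |c| + 2|b| < 2/9, let P(z) = az + z², F(z, w) = (az + z², w² + cw + bz), and set Ω_{2/3} = {(z, w) : z ∈ 𝒜_P, |w| < 2/3}, where 𝒜_P = {z : P^{∘n}(z) → 0}. Then F(Ω_{2/3}) ⊆ Ω_{2/3}, and Ω_{2/3} is contained in the attracting basin of (0,0) for F, i.e., F^{∘n}(z, w) → (0,0) for every (z, w) ∈ Ω_{2/3}. -/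
open Filter Topology


private lemma contraction_lemma (u ε : ℕ → ℝ) (r M : ℝ) (hr0 : 0 ≤ r) (hr1 : r < 1)
    (hu : ∀ n, 0 ≤ u n) (hub : ∀ n, u n ≤ M)
    (hrec : ∀ n, u (n+1) ≤ r * u n + ε n) (hε : Tendsto ε atTop (𝓝 0)) :
    Tendsto u atTop (𝓝 0) := by
  have key : ∀ k : ℕ, ∀ η > (0:ℝ), ∀ᶠ n in atTop, u n < r ^ k * M + η := by
    intro k
    induction k with
    | zero =>
      intro η hη
      filter_upwards with n
      have := hub n
      simp only [pow_zero, one_mul]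
      linarith
    | succ k ih =>
      intro η hη
      have h1 := ih (η/2) (by linarith)
      have h2 : ∀ᶠ n in atTop, ε n < η/2 := hε.eventually (gt_mem_nhds (by linarith))
      have h3 : ∀ᶠ n in atTop, u (n+1) < r ^ (k+1) * M + η := by
        filter_upwards [h1, h2] with n hn1 hn2
        have h4 : r * u n ≤ r * (r ^ k * M + η/2) := by
          apply mul_le_mul_of_nonneg_left (le_of_lt hn1) hr0
        have := hrec n
        have h5 : r * (η/2) ≤ η/2 := by nlinarith
        have hring : r * (r ^ k * M + η/2) = r ^ (k+1) * M + r * (η/2) := by ring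
        linarith
      obtain ⟨N, hN⟩ := eventually_atTop.mp h3
      refine eventually_atTop.mpr ⟨N+1, fun n hn => ?_⟩
      have := hN (n-1) (by omega)
      rwa [Nat.sub_add_cancel (by omega)] at this
  have hM : 0 ≤ M := le_trans (hu 0) (hub 0)
  rw [tendsto_order]
  constructor
  · intro x hx
    filter_upwards with n
    exact lt_of_lt_of_le hx (hu n)
  · intro x hx
    have hpow : Tendsto (fun k => r ^ k * M) atTop (𝓝 0) := by
      simpa using (tendsto_pow_atTop_nhds_zero_of_lt_one hr0 hr1).mul_const M
    obtain ⟨k, hk⟩ := (hpow.eventually (gt_mem_nhds (by linarith : (0:ℝ) < x/2))).exists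
    filter_upwards [key k (x/2) (by linarith)] with n hn
    linarith

private lemma basin_bound (a : ℂ) (ha : ‖a‖ ≤ 1 / 10) (z : ℂ)
    (hz : Tendsto (fun n => (fun x : ℂ => a * x + x ^ 2)^[n] z) atTop (𝓝 0)) :
    ‖z‖ < 2 := by
  by_contra h
  push_neg at h
  set P : ℂ → ℂ := fun x => a * x + x ^ 2 with hP
  have grow : ∀ n, 2 ≤ ‖P^[n] z‖ := by
    intro n
    induction n with
    | zero => simpa using h
    | succ n ih =>
      rw [Function.iterate_succ_apply']
      set y := P^[n] z
      have h1 := norm_add_le (a + y) (-a)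
      rw [show (a + y) + (-a) = y by ring, norm_neg] at h1
      have h2 : ‖P y‖ = ‖y‖ * ‖a + y‖ := by
        rw [hP]
        simp only
        rw [show a * y + y ^ 2 = y * (a + y) by ring, norm_mul]
      rw [h2]
      nlinarith [norm_nonneg y, norm_nonneg (a + y)]
  obtain ⟨N, hN⟩ := (Metric.tendsto_atTop.mp hz) 2 (by norm_num)
  have h3 := hN N le_rfl
  rw [Complex.dist_eq, sub_zero] at h3
  exact absurd h3 (not_lt.mpr (grow N))

/-- For `F(z,w) = (az + z², w² + cw + bz)` with `|a| ≤ 1/10` and `|c| + 2|b| < 2/9`,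
the set `Ω_{2/3} = {(z,w) : z ∈ 𝒜_P, |w| < 2/3}` is forward invariant under `F`
and is contained in the attracting basin of `(0,0)`. -/
theorem stmt10 (a b c : ℂ)
    (ha : ‖a‖ ≤ 1 / 10)
    (hbc : ‖c‖ + 2 * ‖b‖ < 2 / 9) :
    (∀ p ∈ {q : ℂ × ℂ |
        Tendsto (fun n => (fun x : ℂ => a * x + x ^ 2)^[n] q.1) atTop (𝓝 0) ∧
        ‖q.2‖ < 2 / 3},
      (fun q : ℂ × ℂ => (a * q.1 + q.1 ^ 2, q.2 ^ 2 + c * q.2 + b * q.1)) p ∈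
        {q : ℂ × ℂ |
          Tendsto (fun n => (fun x : ℂ => a * x + x ^ 2)^[n] q.1) atTop (𝓝 0) ∧
          ‖q.2‖ < 2 / 3}) ∧
    ∀ p ∈ {q : ℂ × ℂ |
        Tendsto (fun n => (fun x : ℂ => a * x + x ^ 2)^[n] q.1) atTop (𝓝 0) ∧
        ‖q.2‖ < 2 / 3},
      Tendsto (fun n =>
          (fun q : ℂ × ℂ => (a * q.1 + q.1 ^ 2, q.2 ^ 2 + c * q.2 + b * q.1))^[n] p)
        atTop (𝓝 (0, 0)) := by
  set P : ℂ → ℂ := fun x => a * x + x ^ 2 with hP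
  set F : ℂ × ℂ → ℂ × ℂ := fun q => (a * q.1 + q.1 ^ 2, q.2 ^ 2 + c * q.2 + b * q.1)
    with hF
  have hb0 : 0 ≤ ‖b‖ := norm_nonneg b
  have hc0 : 0 ≤ ‖c‖ := norm_nonneg c
  -- forward invariance
  have inv : ∀ p ∈ {q : ℂ × ℂ |
      Tendsto (fun n => P^[n] q.1) atTop (𝓝 0) ∧ ‖q.2‖ < 2 / 3},
      F p ∈ {q : ℂ × ℂ |
      Tendsto (fun n => P^[n] q.1) atTop (𝓝 0) ∧ ‖q.2‖ < 2 / 3} := by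
    rintro ⟨z, w⟩ ⟨hz, hw⟩
    have hz2 : ‖z‖ < 2 := basin_bound a ha z hz
    constructor
    · -- first coordinate: P z still in the basin
      have h1 : Tendsto (fun n => P^[n + 1] z) atTop (𝓝 0) :=
        hz.comp (tendsto_add_atTop_nat 1)
      have h2 : (fun n => P^[n] ((F (z, w)).1)) = fun n => P^[n + 1] z := by
        funext n
        rw [Function.iterate_succ_apply]
      exact h2 ▸ h1
    · -- second coordinate estimate
      show ‖w ^ 2 + c * w + b * z‖ < 2 / 3
      have e1 : ‖w ^ 2 + c * w + b * z‖ ≤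
          ‖w‖ ^ 2 + ‖c‖ * ‖w‖ +
            ‖b‖ * ‖z‖ := by
        calc ‖w ^ 2 + c * w + b * z‖
            ≤ ‖w ^ 2 + c * w‖ + ‖b * z‖ :=
              norm_add_le _ _
          _ ≤ ‖w ^ 2‖ + ‖c * w‖ + ‖b * z‖ := by
              have := norm_add_le (w ^ 2) (c * w); linarith
          _ = ‖w‖ ^ 2 + ‖c‖ * ‖w‖ +
                ‖b‖ * ‖z‖ := by
              rw [norm_pow, norm_mul, norm_mul]
      have hw0 : 0 ≤ ‖w‖ := norm_nonneg w
      nlinarith [norm_nonneg z]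
  refine ⟨inv, ?_⟩
  rintro ⟨z, w⟩ ⟨hz, hw⟩
  -- membership of the whole orbit
  have hmem : ∀ n, F^[n] (z, w) ∈ {q : ℂ × ℂ |
      Tendsto (fun m => P^[m] q.1) atTop (𝓝 0) ∧ ‖q.2‖ < 2 / 3} := by
    intro n
    induction n with
    | zero => exact ⟨hz, hw⟩
    | succ n ih =>
      rw [Function.iterate_succ_apply']
      exact inv _ ih
  -- first coordinate of the orbit is the orbit of P
  have hfst : ∀ n, (F^[n] (z, w)).1 = P^[n] z := by
    intro n
    induction n with
    | zero => rfl
    | succ n ih =>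
      rw [Function.iterate_succ_apply', Function.iterate_succ_apply', ← ih]
  have h1 : Tendsto (fun n => (F^[n] (z, w)).1) atTop (𝓝 0) := by
    simpa only [hfst] using hz
  -- second coordinate via the contraction lemma
  have habs1 : Tendsto (fun n => ‖(F^[n] (z, w)).1‖) atTop (𝓝 0) := by
    have := h1.norm
    simpa using this
  have hu0 : ∀ n, (0:ℝ) ≤ ‖(F^[n] (z, w)).2‖ :=
    fun n => norm_nonneg _
  have hub : ∀ n, ‖(F^[n] (z, w)).2‖ ≤ 2 / 3 :=
    fun n => le_of_lt (hmem n).2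
  have hrec : ∀ n, ‖(F^[n+1] (z, w)).2‖ ≤
      (2 / 3 + ‖c‖) * ‖(F^[n] (z, w)).2‖ +
        ‖b‖ * ‖(F^[n] (z, w)).1‖ := by
    intro n
    rw [Function.iterate_succ_apply']
    set y := F^[n] (z, w)
    show ‖y.2 ^ 2 + c * y.2 + b * y.1‖ ≤ _
    have e1 : ‖y.2 ^ 2 + c * y.2 + b * y.1‖ ≤
        ‖y.2‖ ^ 2 + ‖c‖ * ‖y.2‖ +
          ‖b‖ * ‖y.1‖ := by
      calc ‖y.2 ^ 2 + c * y.2 + b * y.1‖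
          ≤ ‖y.2 ^ 2 + c * y.2‖ + ‖b * y.1‖ :=
            norm_add_le _ _
        _ ≤ ‖y.2 ^ 2‖ + ‖c * y.2‖ + ‖b * y.1‖ := by
            have := norm_add_le (y.2 ^ 2) (c * y.2); linarith
        _ = ‖y.2‖ ^ 2 + ‖c‖ * ‖y.2‖ +
              ‖b‖ * ‖y.1‖ := by
            rw [norm_pow, norm_mul, norm_mul]
    have e2 : ‖y.2‖ ^ 2 ≤ (2 / 3) * ‖y.2‖ := by
      nlinarith [hub n, hu0 n]
    nlinarith [hu0 n]
  have hε : Tendsto (fun n => ‖b‖ * ‖(F^[n] (z, w)).1‖)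
      atTop (𝓝 0) := by
    simpa using habs1.const_mul (‖b‖)
  have h2abs : Tendsto (fun n => ‖(F^[n] (z, w)).2‖) atTop (𝓝 0) :=
    contraction_lemma _ _ (2 / 3 + ‖c‖) (2 / 3)
      (by linarith) (by linarith) hu0 hub hrec hε
  have h2 : Tendsto (fun n => (F^[n] (z, w)).2) atTop (𝓝 0) := by
    rw [tendsto_zero_iff_norm_tendsto_zero]
    simpa using h2abs
  have := h1.prodMk_nhds h2
  simpa using this
end
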